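/- Let f, g ∈ ℤ[X] with f of degree n₁, coefficients bounded in absolute value by 2^{τ₁}, and g of degree n₂, coefficients bounded by 2^{τ₂}. Let A ⊆ roots(f) be a set of complex roots of f such that g(z) ≠ 0 for all z ∈ A, and let μ(z) denote the multiplicity of z as a root of f. Then ∏_{z ∈ A} |g(z)|^{μ(z)} ≤ ((n₂+1)·2^{τ₂})^{n₁} · Mea*(f)^{n₂}, where Mea*(f) := ∏_{z root of f} max(1,|z|)^{μ(z)}. -/

import Mathlib

open Polynomial

/-- The Mahler measure of a complex polynomial without the leading coefficient
factor: ∏_{z root of f, with multiplicity} max(1,|z|). -/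
noncomputable def MeaStar (f : Polynomial ℂ) : ℝ :=
  ((f.roots.map fun z => max 1 ‖z‖).prod)

/-- For f, g ∈ ℤ[X] of magnitudes (n₁,τ₁) and (n₂,τ₂) and A a set of complex
roots of f on which g does not vanish:
∏_{z ∈ A} |g(z)|^{μ(z)} ≤ ((n₂+1)·2^{τ₂})^{n₁} · Mea*(f)^{n₂}. -/
theorem prod_abs_eval_le (f g : Polynomial ℤ) (hf : f ≠ 0) (hg : g ≠ 0)
    (n₁ n₂ τ₁ τ₂ : ℕ)
    (hfd : f.natDegree ≤ n₁) (hfc : ∀ i, |f.coeff i| ≤ 2 ^ τ₁)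
    (hgd : g.natDegree ≤ n₂) (hgc : ∀ i, |g.coeff i| ≤ 2 ^ τ₂)
    (A : Finset ℂ) (hA : ∀ z ∈ A, (f.map (Int.castRingHom ℂ)).IsRoot z)
    (hgA : ∀ z ∈ A, (g.map (Int.castRingHom ℂ)).eval z ≠ 0) :
    ∏ z ∈ A, ‖(g.map (Int.castRingHom ℂ)).eval z‖ ^
        ((f.map (Int.castRingHom ℂ)).rootMultiplicity z) ≤
      (((n₂ : ℝ) + 1) * 2 ^ τ₂) ^ n₁ * (MeaStar (f.map (Int.castRingHom ℂ))) ^ n₂ := by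
  set fc := f.map (Int.castRingHom ℂ) with hfc'
  set gc := g.map (Int.castRingHom ℂ) with hgc'
  set M : ℂ → ℝ := fun z => max 1 ‖z‖ with hM
  set C : ℝ := ((n₂ : ℝ) + 1) * 2 ^ τ₂ with hC
  set s := fc.roots with hs
  have hC1 : (1 : ℝ) ≤ C := by
    have h1 : (1:ℝ) ≤ (n₂ : ℝ) + 1 := by
      have := Nat.cast_nonneg (α := ℝ) n₂; linarith
    have h2 : (1:ℝ) ≤ 2 ^ τ₂ := one_le_pow₀ (by norm_num)
    calc (1:ℝ) = 1 * 1 := by ring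
    _ ≤ C := mul_le_mul h1 h2 (by norm_num) (by positivity)
  have hC0 : (0 : ℝ) ≤ C := le_trans zero_le_one hC1
  -- pointwise bound
  have hpt : ∀ z : ℂ, ‖gc.eval z‖ ≤ C * (M z) ^ n₂ := by
    intro z
    have hM1 : (1 : ℝ) ≤ M z := le_max_left _ _
    have habs : ‖z‖ ≤ M z := le_max_right _ _
    have hdeg : gc.natDegree < n₂ + 1 :=
      lt_of_le_of_lt (le_trans natDegree_map_le hgd) (Nat.lt_succ_self _)
    rw [Polynomial.eval_eq_sum_range' hdeg]
    calc ‖∑ i ∈ Finset.range (n₂ + 1), gc.coeff i * z ^ i‖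
        ≤ ∑ i ∈ Finset.range (n₂ + 1), ‖gc.coeff i * z ^ i‖ :=
          norm_sum_le _ _
      _ ≤ ∑ i ∈ Finset.range (n₂ + 1), (2 : ℝ) ^ τ₂ * (M z) ^ n₂ := by
          apply Finset.sum_le_sum
          intro i hi
          rw [norm_mul, norm_pow]
          have h1 : ‖gc.coeff i‖ ≤ (2 : ℝ) ^ τ₂ := by
            rw [hgc', coeff_map]
            rw [show (Int.castRingHom ℂ) (g.coeff i) = ((g.coeff i : ℤ) : ℂ) from rfl]
            rw [Complex.norm_intCast, ← Int.cast_abs]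
            calc ((|g.coeff i| : ℤ) : ℝ) ≤ ((2 ^ τ₂ : ℤ) : ℝ) := by
                  exact_mod_cast hgc i
              _ = (2 : ℝ) ^ τ₂ := by push_cast; ring
          have h2 : ‖z‖ ^ i ≤ (M z) ^ n₂ := by
            calc ‖z‖ ^ i ≤ (M z) ^ i :=
                  pow_le_pow_left₀ (norm_nonneg z) habs i
              _ ≤ (M z) ^ n₂ := pow_le_pow_right₀ hM1 (Nat.lt_succ_iff.mp (Finset.mem_range.mp hi))
          exact mul_le_mul h1 h2 (by positivity) (by positivity)
      _ = C * (M z) ^ n₂ := by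
          rw [Finset.sum_const, Finset.card_range, nsmul_eq_mul, hC]
          push_cast; ring
  -- the submultiset of roots corresponding to A (with multiplicities)
  set t : Multiset ℂ := A.val.bind (fun z => Multiset.replicate (s.count z) z) with ht
  have hts : t ≤ s := by
    rw [Multiset.le_iff_count]
    intro w
    rw [ht, Multiset.count_bind]
    rw [show (Multiset.map (fun z => Multiset.count w (Multiset.replicate (Multiset.count z s) z)) A.val).sum
        = ∑ z ∈ A, Multiset.count w (Multiset.replicate (Multiset.count z s) z) from rfl]
    by_cases hw : w ∈ A
    · rw [Finset.sum_eq_single_of_mem w hw]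
      · simp [Multiset.count_replicate]
      · intro b _ hbw
        rw [Multiset.count_replicate, if_neg hbw]
    · have hz0 : ∀ z ∈ A, Multiset.count w (Multiset.replicate (Multiset.count z s) z) = 0 := by
        intro z hz
        rw [Multiset.count_replicate, if_neg]
        rintro rfl; exact hw hz
      rw [Finset.sum_congr rfl hz0]
      simp
  have hcardt : Multiset.card t = ∑ z ∈ A, s.count z := by
    rw [ht, Multiset.card_bind]
    simp only [Function.comp, Multiset.card_replicate]
    rfl
  have hsum : ∑ z ∈ A, s.count z ≤ n₁ := by
    rw [← hcardt]
    have h1 : Multiset.card t ≤ Multiset.card s := Multiset.card_le_card hts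
    have h2 : Multiset.card s ≤ fc.natDegree := fc.card_roots'
    have h3 : fc.natDegree ≤ n₁ := le_trans natDegree_map_le hfd
    omega
  have hprodt : (t.map M).prod = ∏ z ∈ A, (M z) ^ (s.count z) := by
    rw [ht, Multiset.map_bind]
    rw [Multiset.prod_bind]
    simp only [Multiset.map_replicate, Multiset.prod_replicate]
    rfl
  have hprod : ∏ z ∈ A, (M z) ^ (s.count z) ≤ MeaStar fc := by
    rw [← hprodt]
    have hMea : MeaStar fc = (s.map M).prod := rfl
    rw [hMea]
    obtain ⟨u, hu⟩ := Multiset.le_iff_exists_add.mp hts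
    rw [hu, Multiset.map_add, Multiset.prod_add]
    have h1 : (1 : ℝ) ≤ (u.map M).prod := by
      apply Multiset.one_le_prod
      intro x hx
      obtain ⟨y, _, rfl⟩ := Multiset.mem_map.mp hx
      exact le_max_left _ _
    have h0 : (0 : ℝ) ≤ (t.map M).prod := by
      apply Multiset.prod_nonneg
      intro x hx
      obtain ⟨y, _, rfl⟩ := Multiset.mem_map.mp hx
      positivity
    exact le_mul_of_one_le_right h0 h1
  have hprodnn : (0:ℝ) ≤ ∏ z ∈ A, (M z) ^ (s.count z) := by positivity
  -- main chain
  calc ∏ z ∈ A, ‖gc.eval z‖ ^ (fc.rootMultiplicity z)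
      = ∏ z ∈ A, ‖gc.eval z‖ ^ (s.count z) := by
        apply Finset.prod_congr rfl
        intro z _
        rw [hs, Polynomial.count_roots]
    _ ≤ ∏ z ∈ A, (C * (M z) ^ n₂) ^ (s.count z) := by
        apply Finset.prod_le_prod
        · intro z _; positivity
        · intro z _
          exact pow_le_pow_left₀ (norm_nonneg _) (hpt z) _
    _ = (∏ z ∈ A, C ^ (s.count z)) * ∏ z ∈ A, ((M z) ^ (s.count z)) ^ n₂ := by
        rw [← Finset.prod_mul_distrib]
        apply Finset.prod_congr rfl
        intro z _
        rw [mul_pow, ← pow_mul, ← pow_mul, Nat.mul_comm]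
    _ = C ^ (∑ z ∈ A, s.count z) * (∏ z ∈ A, (M z) ^ (s.count z)) ^ n₂ := by
        rw [Finset.prod_pow_eq_pow_sum, Finset.prod_pow]
    _ ≤ C ^ n₁ * (MeaStar fc) ^ n₂ := by
        apply mul_le_mul
        · exact pow_le_pow_right₀ hC1 hsum
        · exact pow_le_pow_left₀ hprodnn hprod n₂
        · positivity
        · positivity
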